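/- Let S(x) = Σ_{k≥0} a_k x^k be a real power series convergent on [0, ∞) such that for some k₀, the coefficients a_1, …, a_{k₀} are positive and a_{k₀+1}, a_{k₀+2}, … are all negative. Then there exists x₀ ≥ 0 such that S is increasing on [0, x₀] and decreasing on [x₀, ∞); in particular, S attains its minimum on any interval [0, a] at an endpoint. -/

import Mathlib

set_option maxHeartbeats 1000000

open Finset


-- termwise comparison: x^k * geomsum(w,y) ≤ w^k * geomsum(y,x)
lemma sum_cmp (x y w : ℝ) (hx : 0 ≤ x) (hxy : x ≤ y) (hyw : y ≤ w) (k : ℕ) :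
    x ^ k * (∑ i ∈ range k, w ^ i * y ^ (k - 1 - i)) ≤
      w ^ k * (∑ i ∈ range k, y ^ i * x ^ (k - 1 - i)) := by
  have hy : 0 ≤ y := hx.trans hxy
  have hw : 0 ≤ w := hy.trans hyw
  have hxw : x ≤ w := hxy.trans hyw
  rw [Finset.mul_sum, Finset.mul_sum]
  rw [← Finset.sum_range_reflect (fun i => w ^ k * (y ^ i * x ^ (k - 1 - i))) k]
  apply Finset.sum_le_sum
  intro i hi
  rw [Finset.mem_range] at hi
  have h1 : k - 1 - (k - 1 - i) = i := by omega
  rw [h1]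
  -- goal : x ^ k * (w ^ i * y ^ (k-1-i)) ≤ w ^ k * (y ^ (k-1-i) * x ^ i)
  have hk : i + (k - i) = k := by omega
  have ex : x ^ k = x ^ i * x ^ (k - i) := by rw [← pow_add, hk]
  have ew : w ^ k = w ^ i * w ^ (k - i) := by rw [← pow_add, hk]
  rw [ex, ew]
  have key : x ^ (k - i) ≤ w ^ (k - i) := pow_le_pow_left₀ hx hxw _
  have : x ^ i * x ^ (k - i) * (w ^ i * y ^ (k - 1 - i))
      = (x ^ i * w ^ i * y ^ (k - 1 - i)) * x ^ (k - i) := by ring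
  rw [this]
  have : w ^ i * w ^ (k - i) * (y ^ (k - 1 - i) * x ^ i)
      = (x ^ i * w ^ i * y ^ (k - 1 - i)) * w ^ (k - i) := by ring
  rw [this]
  exact mul_le_mul_of_nonneg_left key (by positivity)

lemma powIneq (x y w : ℝ) (hx : 0 ≤ x) (hxy : x ≤ y) (hyw : y ≤ w) (k : ℕ) :
    (w ^ k - y ^ k) * (y ^ (k+1) - x ^ (k+1)) ≤ (w ^ (k+1) - y ^ (k+1)) * (y ^ k - x ^ k) := by
  have hid : (w ^ (k+1) - y ^ (k+1)) * (y ^ k - x ^ k) - (w ^ k - y ^ k) * (y ^ (k+1) - x ^ (k+1))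
      = w ^ k * ((y ^ k - x ^ k) * (w - y)) - x ^ k * ((w ^ k - y ^ k) * (y - x)) := by ring
  have hQ := geom_sum₂_mul w y k
  have hP := geom_sum₂_mul y x k
  have key := mul_le_mul_of_nonneg_right (sum_cmp x y w hx hxy hyw k)
    (mul_nonneg (sub_nonneg.2 hyw) (sub_nonneg.2 hxy))
  have e1 : x ^ k * ((w ^ k - y ^ k) * (y - x))
      = x ^ k * (∑ i ∈ range k, w ^ i * y ^ (k - 1 - i)) * ((w - y) * (y - x)) := by
    rw [← hQ]; ring
  have e2 : w ^ k * ((y ^ k - x ^ k) * (w - y))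
      = w ^ k * (∑ i ∈ range k, y ^ i * x ^ (k - 1 - i)) * ((w - y) * (y - x)) := by
    rw [← hP]; ring
  linarith [key, hid, e1, e2]

example : True := trivial

lemma sum_cmp_strict (x y w : ℝ) (hx : 0 ≤ x) (hxy : x < y) (hyw : y < w) (k : ℕ) (hk : 1 ≤ k) :
    x ^ k * (∑ i ∈ range k, w ^ i * y ^ (k - 1 - i)) <
      w ^ k * (∑ i ∈ range k, y ^ i * x ^ (k - 1 - i)) := by
  have hy : 0 < y := lt_of_le_of_lt hx hxy
  have hw : 0 < w := hy.trans hyw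
  have hxw : x < w := hxy.trans hyw
  rw [Finset.mul_sum, Finset.mul_sum]
  rw [← Finset.sum_range_reflect (fun i => w ^ k * (y ^ i * x ^ (k - 1 - i))) k]
  apply Finset.sum_lt_sum
  · intro i hi
    rw [Finset.mem_range] at hi
    have h1 : k - 1 - (k - 1 - i) = i := by omega
    rw [h1]
    have hk2 : i + (k - i) = k := by omega
    have ex : x ^ k = x ^ i * x ^ (k - i) := by rw [← pow_add, hk2]
    have ew : w ^ k = w ^ i * w ^ (k - i) := by rw [← pow_add, hk2]
    rw [ex, ew]
    have key : x ^ (k - i) ≤ w ^ (k - i) := pow_le_pow_left₀ hx hxw.le _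
    have e3 : x ^ i * x ^ (k - i) * (w ^ i * y ^ (k - 1 - i))
        = (x ^ i * w ^ i * y ^ (k - 1 - i)) * x ^ (k - i) := by ring
    rw [e3]
    have e4 : w ^ i * w ^ (k - i) * (y ^ (k - 1 - i) * x ^ i)
        = (x ^ i * w ^ i * y ^ (k - 1 - i)) * w ^ (k - i) := by ring
    rw [e4]
    exact mul_le_mul_of_nonneg_left key (by positivity)
  · refine ⟨0, Finset.mem_range.2 (by omega), ?_⟩
    have h1 : k - 1 - (k - 1 - 0) = 0 := by omega
    rw [h1]
    have hxk : x ^ k < w ^ k := pow_lt_pow_left₀ hxw hx (by omega)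
    have h2 := mul_lt_mul_of_pos_right hxk (pow_pos hy (k - 1 - 0))
    simp only [pow_zero, one_mul, mul_one]
    linarith [h2]

lemma powIneqStrict (x y w : ℝ) (hx : 0 ≤ x) (hxy : x < y) (hyw : y < w) (k : ℕ) (hk : 1 ≤ k) :
    (w ^ k - y ^ k) * (y ^ (k+1) - x ^ (k+1)) < (w ^ (k+1) - y ^ (k+1)) * (y ^ k - x ^ k) := by
  have hid : (w ^ (k+1) - y ^ (k+1)) * (y ^ k - x ^ k) - (w ^ k - y ^ k) * (y ^ (k+1) - x ^ (k+1))
      = w ^ k * ((y ^ k - x ^ k) * (w - y)) - x ^ k * ((w ^ k - y ^ k) * (y - x)) := by ring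
  have hQ := geom_sum₂_mul w y k
  have hP := geom_sum₂_mul y x k
  have key := mul_lt_mul_of_pos_right (sum_cmp_strict x y w hx hxy hyw k hk)
    (mul_pos (sub_pos.2 hyw) (sub_pos.2 hxy))
  have e1 : x ^ k * ((w ^ k - y ^ k) * (y - x))
      = x ^ k * (∑ i ∈ range k, w ^ i * y ^ (k - 1 - i)) * ((w - y) * (y - x)) := by
    rw [← hQ]; ring
  have e2 : w ^ k * ((y ^ k - x ^ k) * (w - y))
      = w ^ k * (∑ i ∈ range k, y ^ i * x ^ (k - 1 - i)) * ((w - y) * (y - x)) := by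
    rw [← hP]; ring
  linarith [key, hid, e1, e2]

lemma powChain (x y w : ℝ) (hx : 0 ≤ x) (hxy : x < y) (hyw : y ≤ w) {k m : ℕ} (hkm : k ≤ m) :
    (w ^ k - y ^ k) * (y ^ m - x ^ m) ≤ (w ^ m - y ^ m) * (y ^ k - x ^ k) := by
  induction m, hkm using Nat.le_induction with
  | base => exact le_of_eq (by ring)
  | succ m hkm ih =>
    rcases Nat.eq_zero_or_pos k with hk0 | hk0
    · subst hk0
      simp only [pow_zero, sub_self, zero_mul, mul_zero]
      exact le_refl 0
    · have hm : 1 ≤ m := le_trans hk0 hkm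
      have hym : 0 < y ^ m - x ^ m :=
        sub_pos.2 (pow_lt_pow_left₀ hxy hx (by omega))
      have hI := powIneq x y w hx hxy.le hyw m
      have h1 : 0 ≤ y ^ (m+1) - x ^ (m+1) :=
        sub_nonneg.2 (pow_le_pow_left₀ hx hxy.le _)
      have h2 : 0 ≤ y ^ k - x ^ k := sub_nonneg.2 (pow_le_pow_left₀ hx hxy.le _)
      have c1 := mul_le_mul_of_nonneg_right ih h1
      have c2 := mul_le_mul_of_nonneg_right hI h2
      have : (w ^ k - y ^ k) * (y ^ (m+1) - x ^ (m+1)) * (y ^ m - x ^ m)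
          ≤ (w ^ (m+1) - y ^ (m+1)) * (y ^ k - x ^ k) * (y ^ m - x ^ m) := by nlinarith [c1, c2]
      exact le_of_mul_le_mul_right this hym


section
variable (a : ℕ → ℝ) (k₀ : ℕ)
  (hconv : ∀ x : ℝ, 0 ≤ x → Summable (fun k : ℕ => a k * x ^ k))
  (hpos : ∀ k : ℕ, 1 ≤ k → k ≤ k₀ → 0 < a k)
  (hneg : ∀ k : ℕ, k₀ < k → a k < 0)
  (S : ℝ → ℝ) (hS : ∀ x : ℝ, S x = ∑' k : ℕ, a k * x ^ k)

include hS in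
lemma S_zero : S 0 = a 0 := by
  rw [hS 0, tsum_eq_single 0]
  · simp
  · intro n hn; simp [zero_pow hn]

include hconv hneg hS in
lemma S_bound {y : ℝ} (hy : 0 ≤ y) : S y ≤ ∑ k ∈ range (k₀ + 2), a k * y ^ k := by
  have h := (Summable.sum_add_tsum_nat_add (f := fun k => a k * y ^ k) (k₀ + 2) (hconv y hy)).symm
  rw [hS y, h]
  have : (∑' j : ℕ, a (j + (k₀ + 2)) * y ^ (j + (k₀ + 2))) ≤ 0 := by
    apply tsum_nonpos
    intro j
    exact mul_nonpos_of_nonpos_of_nonneg (hneg (j + (k₀ + 2)) (by omega)).le (pow_nonneg hy _)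
  linarith

include hconv hpos hneg hS in
lemma S_drop : ∃ y : ℝ, 0 < y ∧ S y < S 0 := by
  set C := ∑ i ∈ range k₀, a (i + 1) with hCdef
  have hC : 0 ≤ C := by
    apply Finset.sum_nonneg
    intro i hi
    rw [Finset.mem_range] at hi
    exact (hpos (i + 1) (by omega) (by omega)).le
  set c := -a (k₀ + 1) with hcdef
  have hc : 0 < c := by
    have := hneg (k₀ + 1) (by omega)
    simp only [hcdef]; linarith
  refine ⟨max 1 (C / c + 1), lt_of_lt_of_le one_pos (le_max_left _ _), ?_⟩
  set y := max 1 (C / c + 1) with hydef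
  have hy1 : 1 ≤ y := le_max_left _ _
  have hy0 : 0 < y := lt_of_lt_of_le one_pos hy1
  have hyC : C < c * y := by
    have h1 : C / c + 1 ≤ y := le_max_right _ _
    have h2 : C / c < y := by linarith
    calc C = C / c * c := by field_simp
    _ < y * c := by exact mul_lt_mul_of_pos_right h2 hc
    _ = c * y := mul_comm _ _
  have hb := S_bound a k₀ hconv hneg S hS hy0.le
  have hsum : ∑ k ∈ range (k₀ + 2), a k * y ^ k
      = a 0 + (∑ i ∈ range k₀, a (i + 1) * y ^ (i + 1)) + a (k₀ + 1) * y ^ (k₀ + 1) := by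
    rw [Finset.sum_range_succ, Finset.sum_range_succ']
    simp only [pow_zero, mul_one]
    ring
  have hmid : (∑ i ∈ range k₀, a (i + 1) * y ^ (i + 1)) ≤ C * y ^ k₀ := by
    rw [hCdef, Finset.sum_mul]
    apply Finset.sum_le_sum
    intro i hi
    rw [Finset.mem_range] at hi
    have hp : y ^ (i + 1) ≤ y ^ k₀ := pow_le_pow_right₀ hy1 (by omega)
    exact mul_le_mul_of_nonneg_left hp (hpos (i + 1) (by omega) (by omega)).le
  have hS0 : S 0 = a 0 := S_zero a S hS
  have hyk : 0 < y ^ k₀ := pow_pos hy0 _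
  have hlast : a (k₀ + 1) * y ^ (k₀ + 1) = -(c * (y ^ k₀ * y)) := by
    rw [hcdef, pow_succ]; ring
  rw [hS0]
  have : C * y ^ k₀ - c * (y ^ k₀ * y) < 0 := by nlinarith [hyC, hyk]
  calc S y ≤ ∑ k ∈ range (k₀ + 2), a k * y ^ k := hb
    _ = a 0 + (∑ i ∈ range k₀, a (i + 1) * y ^ (i + 1)) + a (k₀ + 1) * y ^ (k₀ + 1) := hsum
    _ ≤ a 0 + C * y ^ k₀ + -(c * (y ^ k₀ * y)) := by rw [hlast]; linarith [hmid]
    _ < a 0 := by linarith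

include hconv hS in
lemma S_cont {R : ℝ} (hR : 0 < R) : ContinuousOn S (Set.Icc 0 R) := by
  have h2 : Summable fun k => a k * (2 * R) ^ k := hconv _ (by positivity)
  obtain ⟨C, hC⟩ := h2.tendsto_atTop_zero.abs.bddAbove_range
  have hCb : ∀ k, |a k * (2 * R) ^ k| ≤ C := fun k => hC ⟨k, rfl⟩
  have hu : Summable fun k : ℕ => C * (1 / 2 : ℝ) ^ k := summable_geometric_two.mul_left C
  rw [continuousOn_iff_continuous_restrict]
  have : (Set.Icc (0:ℝ) R).domRestrict S = fun p : Set.Icc (0:ℝ) R => ∑' k, a k * (p : ℝ) ^ k := by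
    funext p; exact hS p
  rw [this]
  apply continuous_tsum (u := fun k : ℕ => C * (1 / 2 : ℝ) ^ k)
  · intro k
    exact continuous_const.mul (continuous_subtype_val.pow k)
  · exact hu
  · intro k p
    obtain ⟨p, hp0, hpR⟩ := p
    simp only [Real.norm_eq_abs]
    have e1 : |a k * p ^ k| = |a k| * p ^ k := by
      rw [abs_mul, abs_pow, abs_of_nonneg hp0]
    have e2 : |a k| * p ^ k ≤ |a k| * R ^ k :=
      mul_le_mul_of_nonneg_left (pow_le_pow_left₀ hp0 hpR k) (abs_nonneg _)
    have e3 : |a k| * R ^ k = |a k * (2 * R) ^ k| * (1 / 2 : ℝ) ^ k := by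
      rw [abs_mul, abs_pow, abs_of_nonneg (by positivity : (0:ℝ) ≤ 2 * R), mul_assoc, ← mul_pow]
      rw [show (2 * R * (1 / 2) : ℝ) = R by ring]
    have e4 : |a k * (2 * R) ^ k| * (1 / 2 : ℝ) ^ k ≤ C * (1 / 2 : ℝ) ^ k :=
      mul_le_mul_of_nonneg_right (hCb k) (by positivity)
    calc |a k * p ^ k| = |a k| * p ^ k := e1
      _ ≤ |a k| * R ^ k := e2
      _ = |a k * (2 * R) ^ k| * (1 / 2 : ℝ) ^ k := e3
      _ ≤ C * (1 / 2 : ℝ) ^ k := e4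

end


lemma keyStrict (a : ℕ → ℝ) (k₀ : ℕ)
    (hconv : ∀ x : ℝ, 0 ≤ x → Summable (fun k : ℕ => a k * x ^ k))
    (hpos : ∀ k : ℕ, 1 ≤ k → k ≤ k₀ → 0 < a k)
    (hneg : ∀ k : ℕ, k₀ < k → a k < 0)
    (S : ℝ → ℝ) (hS : ∀ x : ℝ, S x = ∑' k : ℕ, a k * x ^ k)
    {x y w : ℝ} (hx : 0 ≤ x) (hxy : x < y) (hyw : y < w) (hd : S y ≤ S x) :
    S w < S y := by
  have hy : 0 ≤ y := hx.trans hxy.le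
  have hw : 0 ≤ w := hy.trans hyw.le
  have hsub : ∀ u v : ℝ, 0 ≤ u → 0 ≤ v → Summable (fun k => a k * v ^ k - a k * u ^ k) :=
    fun u v hu hv => (hconv v hv).sub (hconv u hu)
  have hsplit : ∀ (m : ℕ) (u v : ℝ), 0 ≤ u → 0 ≤ v →
      S v - S u = (∑ k ∈ range m, (a k * v ^ k - a k * u ^ k)) +
        ∑' j, (a (j + m) * v ^ (j + m) - a (j + m) * u ^ (j + m)) := by
    intro m u v hu hv
    rw [hS v, hS u, ← Summable.tsum_sub (hconv v hv) (hconv u hu),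
      ← Summable.sum_add_tsum_nat_add m (hsub u v hu hv)]
  -- tail summabilities
  have tail_sum : ∀ (m : ℕ) (u v : ℝ), 0 ≤ u → 0 ≤ v →
      Summable (fun j => a (j + m) * v ^ (j + m) - a (j + m) * u ^ (j + m)) :=
    fun m u v hu hv => (summable_nat_add_iff m).2 (hsub u v hu hv)
  rcases Nat.eq_zero_or_pos k₀ with hk0 | hk0
  · -- k₀ = 0 : all coefficients from 1 on negative
    subst hk0
    have hwy := hsplit 1 y w hy hw
    have hterm0 : ∀ j : ℕ, a (j + 1 + 1) * w ^ (j + 1 + 1) - a (j + 1 + 1) * y ^ (j + 1 + 1) ≤ 0 := by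
      intro j
      have ha := hneg (j + 1 + 1) (by omega)
      have hp : y ^ (j+1+1) ≤ w ^ (j+1+1) := pow_le_pow_left₀ hy hyw.le _
      nlinarith [hp, ha]
    have htail := tail_sum 1 y w hy hw
    have : S w - S y < 0 := by
      rw [hwy]
      have h1 : (∑ k ∈ range 1, (a k * w ^ k - a k * y ^ k)) = 0 := by simp
      rw [h1, zero_add, Summable.tsum_eq_zero_add htail]
      have h2 : a (0 + 1) * w ^ (0 + 1) - a (0 + 1) * y ^ (0 + 1) < 0 := by
        have ha := hneg 1 (by omega)
        simp only [zero_add, pow_one]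
        nlinarith [ha, hyw]
      have h3 : (∑' j, (a (j + 1 + 1) * w ^ (j + 1 + 1) - a (j + 1 + 1) * y ^ (j + 1 + 1))) ≤ 0 :=
        tsum_nonpos hterm0
      linarith
    linarith
  · -- k₀ ≥ 1
    have hΔ : 0 < y ^ k₀ - x ^ k₀ := sub_pos.2 (pow_lt_pow_left₀ hxy hx (by omega))
    have hΓ : 0 < w ^ k₀ - y ^ k₀ := sub_pos.2 (pow_lt_pow_left₀ hyw hy (by omega))
    have hwy := hsplit (k₀ + 1) y w hy hw
    have hyx := hsplit (k₀ + 1) x y hx hy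
    -- head comparison
    have claim1 : (∑ k ∈ range (k₀ + 1), (a k * w ^ k - a k * y ^ k)) * (y ^ k₀ - x ^ k₀)
        ≤ (∑ k ∈ range (k₀ + 1), (a k * y ^ k - a k * x ^ k)) * (w ^ k₀ - y ^ k₀) := by
      rw [Finset.sum_mul, Finset.sum_mul]
      apply Finset.sum_le_sum
      intro k hk
      rw [Finset.mem_range] at hk
      rcases Nat.eq_zero_or_pos k with hk1 | hk1
      · subst hk1; simp
      · have ha := hpos k hk1 (by omega)
        have hc := powChain x y w hx hxy hyw.le (show k ≤ k₀ by omega)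
        have := mul_le_mul_of_nonneg_left hc ha.le
        nlinarith [this]
    -- tail comparison (strict)
    have claim2 : (∑' j, (a (j + (k₀ + 1)) * w ^ (j + (k₀ + 1)) - a (j + (k₀ + 1)) * y ^ (j + (k₀ + 1)))) * (y ^ k₀ - x ^ k₀)
        < (∑' j, (a (j + (k₀ + 1)) * y ^ (j + (k₀ + 1)) - a (j + (k₀ + 1)) * x ^ (j + (k₀ + 1)))) * (w ^ k₀ - y ^ k₀) := by
      rw [← tsum_mul_right, ← tsum_mul_right]
      have s1 := (tail_sum (k₀ + 1) y w hy hw).mul_right (y ^ k₀ - x ^ k₀)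
      have s2 := (tail_sum (k₀ + 1) x y hx hy).mul_right (w ^ k₀ - y ^ k₀)
      apply Summable.tsum_lt_tsum (i := 0) _ _ s1 s2
      · intro j
        have hm : k₀ < j + (k₀ + 1) := by omega
        have ha := hneg (j + (k₀ + 1)) hm
        have hc := powChain x y w hx hxy hyw.le (show k₀ ≤ j + (k₀ + 1) by omega)
        have h5 := mul_le_mul_of_nonpos_left hc ha.le
        beta_reduce
        nlinarith [h5]
      · have ha := hneg (0 + (k₀ + 1)) (by omega)
        have hst := powIneqStrict x y w hx hxy hyw k₀ (by omega)
        have h6 := mul_lt_mul_of_neg_left hst ha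
        simp only [zero_add] at h6 ⊢
        nlinarith [h6]
    have hfin : (S w - S y) * (y ^ k₀ - x ^ k₀) < (S y - S x) * (w ^ k₀ - y ^ k₀) := by
      rw [hwy, hyx, add_mul, add_mul]
      exact add_lt_add_of_le_of_lt claim1 claim2
    have h0 : (S y - S x) * (w ^ k₀ - y ^ k₀) ≤ 0 :=
      mul_nonpos_of_nonpos_of_nonneg (sub_nonpos.2 hd) hΓ.le
    nlinarith [hfin, h0, hΔ]


theorem stmt_11 (a : ℕ → ℝ) (k₀ : ℕ)
    (hconv : ∀ x : ℝ, 0 ≤ x → Summable (fun k : ℕ => a k * x ^ k))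
    (hpos : ∀ k : ℕ, 1 ≤ k → k ≤ k₀ → 0 < a k)
    (hneg : ∀ k : ℕ, k₀ < k → a k < 0)
    (S : ℝ → ℝ) (hS : ∀ x : ℝ, S x = ∑' k : ℕ, a k * x ^ k) :
    ∃ x₀ : ℝ, 0 ≤ x₀ ∧ MonotoneOn S (Set.Icc 0 x₀) ∧ AntitoneOn S (Set.Ici x₀) ∧
      ∀ c : ℝ, 0 ≤ c → ∀ x ∈ Set.Icc (0 : ℝ) c, min (S 0) (S c) ≤ S x := by
  have key : ∀ {x y w : ℝ}, 0 ≤ x → x < y → y < w → S y ≤ S x → S w < S y :=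
    fun hx hxy hyw hd => keyStrict a k₀ hconv hpos hneg S hS hx hxy hyw hd
  have bstrict : ∀ x y z w : ℝ, 0 ≤ x → x < y → y ≤ z → z < w → S y ≤ S x → S w < S z := by
    intro x y z w hx hxy hyz hzw hd
    rcases eq_or_lt_of_le hyz with rfl | hyz'
    · exact key hx hxy hzw hd
    · have h1 : S z < S y := key hx hxy hyz' hd
      exact key (hx.trans hxy.le) hyz' hzw h1.le
  obtain ⟨yd, hyd0, hydS⟩ := S_drop a k₀ hconv hpos hneg S hS
  set D := {v : ℝ | 0 ≤ v ∧ ∃ u, 0 ≤ u ∧ u < v ∧ S v ≤ S u} with hD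
  have hDne : D.Nonempty := ⟨yd, hyd0.le, 0, le_refl 0, hyd0, hydS.le⟩
  have hDbdd : BddBelow D := ⟨0, fun v hv => hv.1⟩
  have hx00 : (0:ℝ) ≤ sInf D := le_csInf hDne fun v hv => hv.1
  have hnotD : ∀ t, 0 ≤ t → t < sInf D → ∀ u, 0 ≤ u → u < t → S u < S t := by
    intro t ht htx u hu hut
    by_contra h
    push_neg at h
    have htD : t ∈ D := ⟨ht, u, hu, hut, h⟩
    have := csInf_le hDbdd htD
    linarith
  have hmono : MonotoneOn S (Set.Icc 0 (sInf D)) := by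
    rintro u ⟨hu0, hux⟩ v ⟨hv0, hvx⟩ huv
    rcases eq_or_lt_of_le huv with rfl | huv'
    · exact le_refl _
    rcases eq_or_lt_of_le hvx with hveq | hvlt
    · -- v = sInf D : take left limit
      have hlim : Filter.Tendsto S (nhdsWithin v (Set.Ioo u v)) (nhds (S v)) := by
        have hc := S_cont a hconv S hS (R := v + 1) (by linarith [hu0.trans huv'.le])
        exact ((hc v ⟨hv0, by linarith⟩).mono
          (fun t ht => ⟨by linarith [ht.1, hu0], by linarith [ht.2]⟩)).tendsto
      have hne : (nhdsWithin v (Set.Ioo u v)).NeBot := by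
        apply mem_closure_iff_nhdsWithin_neBot.mp
        rw [closure_Ioo (ne_of_lt huv')]
        exact ⟨huv'.le, le_refl v⟩
      apply ge_of_tendsto hlim
      filter_upwards [self_mem_nhdsWithin] with t ht
      have ht0 : 0 ≤ t := le_trans hu0 ht.1.le
      have htx : t < sInf D := hveq ▸ ht.2
      exact (hnotD t ht0 htx u hu0 ht.1).le
    · exact (hnotD v hv0 hvlt u hu0 huv').le
  have hanti' : ∀ z w : ℝ, sInf D < z → z < w → S w < S z := by
    intro z w hxz hzw
    obtain ⟨y', hy'D, hy'z⟩ := exists_lt_of_csInf_lt hDne hxz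
    obtain ⟨hy'0, u, hu0, huy', hd⟩ := hy'D
    exact bstrict u y' z w hu0 huy' hy'z.le hzw hd
  have hanti : AntitoneOn S (Set.Ici (sInf D)) := by
    rintro z hz w hw hzw
    simp only [Set.mem_Ici] at hz hw
    rcases eq_or_lt_of_le hzw with rfl | hzw'
    · exact le_refl _
    rcases eq_or_lt_of_le hz with hze | hzlt
    · -- sInf D = z : right limit
      have hlim : Filter.Tendsto S (nhdsWithin z (Set.Ioo z w)) (nhds (S z)) := by
        have hz0 : 0 ≤ z := hze ▸ hx00
        have hc := S_cont a hconv S hS (R := w + 1) (by linarith)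
        exact ((hc z ⟨hz0, by linarith⟩).mono
          (fun t ht => ⟨by linarith [ht.1], by linarith [ht.2]⟩)).tendsto
      have hne : (nhdsWithin z (Set.Ioo z w)).NeBot := by
        apply mem_closure_iff_nhdsWithin_neBot.mp
        rw [closure_Ioo (ne_of_lt hzw')]
        exact ⟨le_refl z, hzw'.le⟩
      apply ge_of_tendsto hlim
      filter_upwards [self_mem_nhdsWithin] with t ht
      exact (hanti' t w (hze ▸ ht.1) ht.2).le
    · exact (hanti' z w hzlt hzw').le
  refine ⟨sInf D, hx00, hmono, hanti, ?_⟩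
  intro c hc x hx
  obtain ⟨hx0, hxc⟩ := hx
  rcases le_or_gt x (sInf D) with hxle | hxgt
  · have : S 0 ≤ S x := hmono ⟨le_refl 0, hx00⟩ ⟨hx0, hxle⟩ hx0
    exact le_trans (min_le_left _ _) this
  · have : S c ≤ S x := hanti (Set.mem_Ici.mpr hxgt.le) (Set.mem_Ici.mpr (le_trans hxgt.le hxc)) hxc
    exact le_trans (min_le_right _ _) this
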